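/- arXiv:1203.5648 — 2 statements merged into one kernel-verified Lean document; each statement's English description precedes it below -/
import Mathlib

section
/- There exists a constant C > 0 such that for every e ∈ ℝ, every p ∈ [0,2] and every b_1 > 0, |∫ K_1^{(1)}((ε̃ − e)/b_1) ε̃^p f(ε̃) dε̃| ≤ C b_1^2 (Lemma 4, first-derivative bound). -/
open MeasureTheory Real
open Filter

private lemma lip_half (g : ℝ → ℝ) (L : ℝ)
    (hg : Continuous g)
    (hd : ∀ x : ℝ, x ≠ 0 → DifferentiableAt ℝ g x)
    (hb : ∀ x : ℝ, x ≠ 0 → |deriv g x| ≤ L)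
    {u e : ℝ} (hu : 0 ≤ u) (he : 0 ≤ e) :
    |g u - g e| ≤ L * |u - e| := by
  have key : ∀ t : ℝ, 0 < t → |g (u + t) - g (e + t)| ≤ L * |u - e| := by
    intro t ht
    have h1 : ∀ x ∈ Set.Ioi (0:ℝ), DifferentiableAt ℝ g x := fun x hx => hd x (ne_of_gt hx)
    have h2 : ∀ x ∈ Set.Ioi (0:ℝ), ‖deriv g x‖ ≤ L := fun x hx => hb x (ne_of_gt hx)
    have hmvt := Convex.norm_image_sub_le_of_norm_deriv_le h1 h2 (convex_Ioi 0)
        (Set.mem_Ioi.mpr (by linarith) : e + t ∈ Set.Ioi (0:ℝ))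
        (Set.mem_Ioi.mpr (by linarith) : u + t ∈ Set.Ioi (0:ℝ))
    simpa [Real.norm_eq_abs, add_sub_add_right_eq_sub] using hmvt
  have hc : Continuous (fun t : ℝ => |g (u + t) - g (e + t)|) := by fun_prop
  have hten := (hc.tendsto 0).mono_left (nhdsWithin_le_nhds (s := Set.Ioi (0:ℝ)))
  have := le_of_tendsto hten (eventually_nhdsWithin_of_forall fun t ht => key t ht)
  simpa using this

private lemma lip_all (g : ℝ → ℝ) (L : ℝ)
    (hg : Continuous g)
    (hd : ∀ x : ℝ, x ≠ 0 → DifferentiableAt ℝ g x)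
    (hb : ∀ x : ℝ, x ≠ 0 → |deriv g x| ≤ L) :
    ∀ u e : ℝ, |g u - g e| ≤ L * |u - e| := by
  have hneg : ∀ u e : ℝ, u ≤ 0 → e ≤ 0 → |g u - g e| ≤ L * |u - e| := by
    intro u e hu he
    have hGc : Continuous (fun x : ℝ => g (-x)) := hg.comp continuous_neg
    have hGd : ∀ x : ℝ, x ≠ 0 → DifferentiableAt ℝ (fun x : ℝ => g (-x)) x := by
      intro x hx
      exact (hd (-x) (neg_ne_zero.mpr hx)).comp x (differentiable_neg x)
    have hGb : ∀ x : ℝ, x ≠ 0 → |deriv (fun x : ℝ => g (-x)) x| ≤ L := by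
      intro x hx
      have : deriv (fun x : ℝ => g (-x)) x = -deriv g (-x) := by
        simpa [Function.comp_def] using ((hd (-x) (neg_ne_zero.mpr hx)).hasDerivAt.scomp x
          ((hasDerivAt_id x).neg)).deriv
      rw [this, abs_neg]
      exact hb (-x) (neg_ne_zero.mpr hx)
    have := lip_half (fun x : ℝ => g (-x)) L hGc hGd hGb
      (u := -u) (e := -e) (by linarith) (by linarith)
    simp only [neg_neg] at this
    rwa [show (-u:ℝ) - -e = -(u - e) from by ring, abs_neg] at this
  intro u e
  rcases le_total 0 u with hu | hu <;> rcases le_total 0 e with he | he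
  · exact lip_half g L hg hd hb hu he
  · calc |g u - g e| ≤ |g u - g 0| + |g 0 - g e| := abs_sub_le _ _ _
      _ ≤ L * |u - 0| + L * |0 - e| :=
        add_le_add (lip_half g L hg hd hb hu le_rfl) (hneg 0 e le_rfl he)
      _ = L * |u - e| := by
        rw [← mul_add]
        congr 1
        rw [sub_zero, zero_sub, abs_neg, abs_of_nonneg hu, abs_of_nonpos he,
          abs_of_nonneg (by linarith : (0:ℝ) ≤ u - e)]
        ring
  · calc |g u - g e| ≤ |g u - g 0| + |g 0 - g e| := abs_sub_le _ _ _
      _ ≤ L * |u - 0| + L * |0 - e| :=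
        add_le_add (hneg u 0 hu le_rfl) (lip_half g L hg hd hb le_rfl he)
      _ = L * |u - e| := by
        rw [← mul_add]
        congr 1
        rw [sub_zero, zero_sub, abs_neg, abs_of_nonpos hu, abs_of_nonneg he,
          abs_of_nonpos (by linarith : u - e ≤ (0:ℝ))]
        ring
  · exact hneg u e hu he

private lemma hp_hasDerivAt (f : ℝ → ℝ) (hf : Differentiable ℝ f) (p : ℝ) {x : ℝ} (hx : x ≠ 0) :
    HasDerivAt (fun u : ℝ => u ^ p * f u) (p * x ^ (p - 1) * f x + x ^ p * deriv f x) x :=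
  (Real.hasDerivAt_rpow_const (Or.inl hx)).mul (hf x).hasDerivAt

/-- Lemma 4, first-derivative bound: there exists `C > 0` such that
for every `e ∈ ℝ`, every `p ∈ [0,2]` and every `b1 > 0`,
`|∫ K1^{(1)}((u - e)/b1) u^p f(u) du| ≤ C b1²`. -/
theorem lemma4_first_derivative_bound
    (f K1 : ℝ → ℝ)
    -- f is a probability density function on ℝ
    (hf_nonneg : ∀ x, 0 ≤ f x)
    (hf_int : ∫ x, f x = 1)
    -- f has bounded continuous second-order derivatives
    (hf_C2 : ContDiff ℝ 2 f)
    (hf_bd : ∀ k, k ≤ 2 → ∃ C : ℝ, ∀ x : ℝ, |iteratedDeriv k f x| ≤ C)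
    -- the functions h_p(e) = e^p f(e) have bounded derivatives up to order 2
    (hhp_bd : ∀ p ∈ Set.Icc (0:ℝ) 2, ∀ k, k ≤ 2 →
      ∃ C : ℝ, ∀ e : ℝ, |iteratedDeriv k (fun u : ℝ => u ^ p * f u) e| ≤ C)
    -- K1 is a symmetric, compactly supported, C³ kernel
    (hK1_symm : ∀ v, K1 (-v) = K1 v)
    (hK1_supp : HasCompactSupport K1)
    (hK1_C3 : ContDiff ℝ 3 K1)
    (hK1_int : ∫ v, K1 v = 1)
    (hK1_deriv_int : ∀ ℓ ∈ ({1,2,3} : Set ℕ), ∫ v, iteratedDeriv ℓ K1 v = 0)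
    (hK1_vderiv_int : ∀ ℓ ∈ ({2,3} : Set ℕ), ∫ v, v * iteratedDeriv ℓ K1 v = 0) :
    ∃ C > (0:ℝ), ∀ (e p b1 : ℝ), p ∈ Set.Icc (0:ℝ) 2 → 0 < b1 →
      |∫ u, iteratedDeriv 1 K1 ((u - e) / b1) * (u ^ p * f u)| ≤ C * b1^2 := by
  -- basic differentiability facts
  have hfd : Differentiable ℝ f := hf_C2.differentiable (by norm_num)
  have hfc : Continuous f := hf_C2.continuous
  have hfd' : Differentiable ℝ (deriv f) := by
    have h2 : ContDiff ℝ (1 + 1) f := by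
      have e12 : ((1:WithTop ℕ∞) + 1) = 2 := by norm_num
      rw [e12]; exact hf_C2
    exact ((contDiff_succ_iff_deriv.mp h2).2.2).differentiable one_ne_zero
  -- constants
  obtain ⟨M1, hM1⟩ := hf_bd 1 (by norm_num)
  obtain ⟨M2, hM2⟩ := hf_bd 2 le_rfl
  rw [iteratedDeriv_one] at hM1
  have hM2' : ∀ x, |deriv (deriv f) x| ≤ M2 := by
    intro x
    have := hM2 x
    rwa [iteratedDeriv_succ, iteratedDeriv_one] at this
  have hM1n : 0 ≤ M1 := le_trans (abs_nonneg _) (hM1 0)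
  have hM2n : 0 ≤ M2 := le_trans (abs_nonneg _) (hM2' 0)
  obtain ⟨C10, hC10'⟩ := hhp_bd 1 ⟨by norm_num, by norm_num⟩ 0 (by norm_num)
  have hC10 : ∀ x : ℝ, |x * f x| ≤ C10 := by
    intro x
    have := hC10' x
    simpa [iteratedDeriv_zero, Real.rpow_one] using this
  have hC10n : 0 ≤ C10 := le_trans (abs_nonneg _) (hC10 0)
  obtain ⟨C21, hC21'⟩ := hhp_bd 2 ⟨by norm_num, le_rfl⟩ 1 (by norm_num)
  have hC21 : ∀ x : ℝ, |2 * x * f x + x ^ 2 * deriv f x| ≤ C21 := by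
    intro x
    have hD : HasDerivAt (fun u : ℝ => u ^ (2:ℝ) * f u) (2 * x * f x + x ^ 2 * deriv f x) x := by
      have h := (Real.hasDerivAt_rpow_const (x := x) (p := 2) (Or.inr one_le_two)).mul
        (hfd x).hasDerivAt
      refine h.congr_deriv ?_
      rw [show (2:ℝ) - 1 = 1 by norm_num, Real.rpow_one,
        show x ^ (2:ℝ) = x ^ 2 from by rw [show (2:ℝ) = ((2:ℕ):ℝ) by norm_num, Real.rpow_natCast]]
    have h := hC21' x
    rwa [iteratedDeriv_one, hD.deriv] at h
  have hC21n : 0 ≤ C21 := le_trans (abs_nonneg _) (hC21' 0)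
  have hQ : ∀ x : ℝ, |x ^ 2 * deriv f x| ≤ C21 + 2 * C10 := by
    intro x
    have h1 := hC21 x
    have h2 := hC10 x
    have e : x ^ 2 * deriv f x = (2 * x * f x + x ^ 2 * deriv f x) - 2 * (x * f x) := by ring
    rw [e]
    calc |(2 * x * f x + x ^ 2 * deriv f x) - 2 * (x * f x)|
        ≤ |2 * x * f x + x ^ 2 * deriv f x| + |2 * (x * f x)| := abs_sub _ _
      _ ≤ C21 + 2 * C10 := by
          rw [abs_mul, abs_two]
          have := abs_nonneg (x * f x)
          nlinarith
  -- f 0 = 0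
  have f0 : f 0 = 0 := by
    obtain ⟨Ch, hCh⟩ := hhp_bd (1/2) ⟨by norm_num, by norm_num⟩ 1 (by norm_num)
    have key : ∀ u : ℝ, u ∈ Set.Ioc (0:ℝ) 1 → f u ≤ 2 * (Ch + M1) * u ^ (1/2 : ℝ) := by
      intro u hu
      have hune : u ≠ 0 := ne_of_gt hu.1
      have hb := hCh u
      rw [iteratedDeriv_one, (hp_hasDerivAt f hfd (1/2) hune).deriv] at hb
      have e1 : ((1:ℝ)/2 - 1) = -(1/2:ℝ) := by norm_num
      rw [e1] at hb
      have h2 : |u ^ (1/2:ℝ) * deriv f u| ≤ M1 := by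
        rw [abs_mul]
        have hle : |u ^ (1/2:ℝ)| ≤ 1 := by
          rw [abs_of_nonneg (Real.rpow_nonneg hu.1.le _)]
          exact Real.rpow_le_one hu.1.le hu.2 (by norm_num)
        calc |u ^ (1/2:ℝ)| * |deriv f u| ≤ 1 * M1 :=
              mul_le_mul hle (hM1 u) (abs_nonneg _) zero_le_one
          _ = M1 := one_mul _
      have h1 : (1/2:ℝ) * u ^ (-(1/2) : ℝ) * f u ≤ Ch + M1 := by
        have ha := abs_le.mp hb
        have hb2 := abs_le.mp h2
        linarith [ha.2, hb2.1, hb2.2]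
      have hrp : u ^ (1/2:ℝ) * u ^ (-(1/2):ℝ) = 1 := by
        rw [← Real.rpow_add hu.1]; norm_num
      have heq : f u = (2 * u ^ (1/2:ℝ)) * ((1/2:ℝ) * u ^ (-(1/2):ℝ) * f u) := by
        linear_combination (-f u) * hrp
      rw [heq]
      calc (2 * u ^ (1/2:ℝ)) * ((1/2:ℝ) * u ^ (-(1/2):ℝ) * f u)
          ≤ (2 * u ^ (1/2:ℝ)) * (Ch + M1) :=
            mul_le_mul_of_nonneg_left h1 (by have := Real.rpow_nonneg hu.1.le (1/2:ℝ); linarith)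
        _ = 2 * (Ch + M1) * u ^ (1/2:ℝ) := by ring
    have ht1 : Tendsto f (nhdsWithin 0 (Set.Ioi 0)) (nhds (f 0)) :=
      (hfc.tendsto 0).mono_left nhdsWithin_le_nhds
    have ht2 : Tendsto (fun u : ℝ => 2 * (Ch + M1) * u ^ (1/2:ℝ))
        (nhdsWithin 0 (Set.Ioi 0)) (nhds 0) := by
      have hca : ContinuousAt (fun u : ℝ => u ^ (1/2:ℝ)) 0 :=
        Real.continuousAt_rpow_const 0 _ (Or.inr (by norm_num))
      have h0 : (0:ℝ) ^ (1/2:ℝ) = 0 := by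
        rw [Real.zero_rpow]; norm_num
      have ht := (hca.tendsto.mono_left
        (nhdsWithin_le_nhds (s := Set.Ioi (0:ℝ)))).const_mul (2*(Ch+M1))
      rw [h0, mul_zero] at ht
      exact ht
    have hev : ∀ᶠ u in nhdsWithin 0 (Set.Ioi 0), f u ≤ 2 * (Ch + M1) * u ^ (1/2:ℝ) := by
      filter_upwards [Ioc_mem_nhdsGT_of_mem (by norm_num : (0:ℝ) ∈ Set.Ico (0:ℝ) 1)] with u hu
      exact key u hu
    have hle0 : f 0 ≤ 0 := le_of_tendsto_of_tendsto ht1 ht2 hev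
    linarith [hf_nonneg 0]
  -- deriv f 0 = 0
  have df0 : deriv f 0 = 0 := by
    have hmin : IsLocalMin f 0 :=
      Filter.Eventually.of_forall (fun x => by rw [f0]; exact hf_nonneg x)
    exact hmin.deriv_eq_zero
  -- |f'| ≤ M2 |t|,  f ≤ M2 t²
  have hder_lip : ∀ t : ℝ, |deriv f t| ≤ M2 * |t| := by
    intro t
    have := Convex.norm_image_sub_le_of_norm_deriv_le (f := deriv f)
      (fun x _ => hfd' x) (fun x _ => hM2' x) convex_univ (Set.mem_univ 0) (Set.mem_univ t)
    simpa [df0] using this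
  have fquad : ∀ u : ℝ, f u ≤ M2 * u ^ 2 := by
    intro u
    have hball : ∀ x ∈ Set.Icc (-|u|) |u|, ‖deriv f x‖ ≤ M2 * |u| := by
      intro x hx
      have hxu : |x| ≤ |u| := abs_le.mpr ⟨hx.1, hx.2⟩
      calc ‖deriv f x‖ ≤ M2 * |x| := hder_lip x
        _ ≤ M2 * |u| := by nlinarith
    have hmem0 : (0:ℝ) ∈ Set.Icc (-|u|) |u| := ⟨by simp [neg_nonpos], abs_nonneg u⟩
    have hmemu : u ∈ Set.Icc (-|u|) |u| := ⟨neg_abs_le u, le_abs_self u⟩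
    have := Convex.norm_image_sub_le_of_norm_deriv_le (f := f)
      (fun x _ => hfd x) hball (convex_Icc _ _) hmem0 hmemu
    have h2 : |f u| ≤ M2 * |u| * |u| := by simpa [f0] using this
    calc f u ≤ |f u| := le_abs_self _
      _ ≤ M2 * |u| * |u| := h2
      _ = M2 * u ^ 2 := by rw [mul_assoc, abs_mul_abs_self]; ring
  -- the uniform Lipschitz constant
  set L : ℝ := M1 + (C21 + 2 * C10) + 2 * C10 + 2 * M2 with hLdef
  have hLb : ∀ p ∈ Set.Icc (0:ℝ) 2, ∀ x : ℝ, x ≠ 0 →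
      |deriv (fun u : ℝ => u ^ p * f u) x| ≤ L := by
    intro p hp x hx
    rw [(hp_hasDerivAt f hfd p hx).deriv]
    have habs2 : |x| ^ (2:ℝ) = x ^ 2 := by
      rw [show (2:ℝ) = ((2:ℕ):ℝ) by norm_num, Real.rpow_natCast, sq_abs]
    have hT2 : |x ^ p * deriv f x| ≤ M1 + (C21 + 2 * C10) := by
      rw [abs_mul]
      rcases le_or_gt |x| 1 with hx1 | hx1
      · have h1 : |x ^ p| ≤ 1 := by
          calc |x ^ p| ≤ |x| ^ p := Real.abs_rpow_le_abs_rpow x p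
            _ ≤ 1 := Real.rpow_le_one (abs_nonneg x) hx1 hp.1
        calc |x ^ p| * |deriv f x| ≤ 1 * M1 :=
            mul_le_mul h1 (hM1 x) (abs_nonneg _) zero_le_one
          _ ≤ M1 + (C21 + 2 * C10) := by nlinarith
      · have h1 : |x ^ p| ≤ x ^ 2 := by
          calc |x ^ p| ≤ |x| ^ p := Real.abs_rpow_le_abs_rpow x p
            _ ≤ |x| ^ (2:ℝ) := Real.rpow_le_rpow_of_exponent_le hx1.le hp.2
            _ = x ^ 2 := habs2
        calc |x ^ p| * |deriv f x| ≤ x ^ 2 * |deriv f x| :=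
            mul_le_mul_of_nonneg_right h1 (abs_nonneg _)
          _ = |x ^ 2 * deriv f x| := by rw [abs_mul, abs_of_nonneg (sq_nonneg x)]
          _ ≤ C21 + 2 * C10 := hQ x
          _ ≤ M1 + (C21 + 2 * C10) := by linarith
    have hT1 : |p * x ^ (p - 1) * f x| ≤ 2 * C10 + 2 * M2 := by
      have hfx : 0 ≤ f x := hf_nonneg x
      have hT1e : |p * x ^ (p - 1) * f x| ≤ 2 * (|x| ^ (p - 1) * f x) := by
        rw [abs_mul, abs_mul, abs_of_nonneg hfx]
        have hp2 : |p| ≤ 2 := by rw [abs_of_nonneg hp.1]; exact hp.2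
        have habr := Real.abs_rpow_le_abs_rpow x (p - 1)
        calc |p| * |x ^ (p-1)| * f x ≤ (2 * (|x| ^ (p-1))) * f x := by
              apply mul_le_mul_of_nonneg_right _ hfx
              exact mul_le_mul hp2 habr (abs_nonneg _) (by norm_num)
          _ = 2 * (|x| ^ (p-1) * f x) := by ring
      rcases le_or_gt 1 |x| with hx1 | hx1
      · have h1 : |x| ^ (p - 1) ≤ |x| := by
          calc |x| ^ (p - 1) ≤ |x| ^ (1:ℝ) :=
              Real.rpow_le_rpow_of_exponent_le hx1 (by linarith [hp.2])
            _ = |x| := Real.rpow_one _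
        have h2 : |x| ^ (p-1) * f x ≤ |x| * f x :=
          mul_le_mul_of_nonneg_right h1 hfx
        have h3 : |x| * f x ≤ C10 := by
          calc |x| * f x = |x * f x| := by rw [abs_mul, abs_of_nonneg hfx]
            _ ≤ C10 := hC10 x
        linarith [hT1e]
      · have hax : 0 < |x| := abs_pos.mpr hx
        have h1 : |x| ^ (p - 1) * f x ≤ |x| ^ (p-1) * (M2 * x ^ 2) :=
          mul_le_mul_of_nonneg_left (fquad x) (Real.rpow_nonneg (abs_nonneg x) _)
        have h2 : |x| ^ (p-1) * x ^ 2 = |x| ^ (p + 1) := by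
          rw [← habs2, ← Real.rpow_add hax]
          congr 1
          ring
        have h3 : |x| ^ (p + 1) ≤ 1 :=
          Real.rpow_le_one (abs_nonneg x) hx1.le (by linarith [hp.1])
        have : |x| ^ (p-1) * f x ≤ M2 := by nlinarith
        linarith [hT1e, mul_le_mul_of_nonneg_left this (by norm_num : (0:ℝ) ≤ 2)]
    calc |p * x ^ (p - 1) * f x + x ^ p * deriv f x|
        ≤ |p * x ^ (p - 1) * f x| + |x ^ p * deriv f x| := abs_add_le _ _
      _ ≤ L := by rw [hLdef]; linarith
  have hL0 : 0 ≤ L := by rw [hLdef]; positivity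
  -- the kernel derivative
  have hKdC : Continuous (deriv K1) := by
    have h2 : ContDiff ℝ (2 + 1) K1 := by
      have e3 : ((2:WithTop ℕ∞) + 1) = 3 := by norm_num
      rw [e3]; exact hK1_C3
    exact ((contDiff_succ_iff_deriv.mp h2).2.2).continuous
  have hKds : HasCompactSupport (deriv K1) := hK1_supp.deriv
  have hKd0 : ∫ v, deriv K1 v = 0 := by
    have h := hK1_deriv_int 1 (by simp)
    rwa [iteratedDeriv_one] at h
  have hJint : Integrable (fun v : ℝ => |v| * |deriv K1 v|) := by
    apply Continuous.integrable_of_hasCompactSupport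
    · exact continuous_abs.mul hKdC.abs
    · exact (hKds.abs).mul_left
  set J : ℝ := ∫ v, |v| * |deriv K1 v| with hJdef
  have hJ0 : 0 ≤ J :=
    integral_nonneg (fun v => mul_nonneg (abs_nonneg _) (abs_nonneg _))
  refine ⟨L * J + 1, by positivity, ?_⟩
  intro e p b1 hp hb1
  simp only [iteratedDeriv_one]
  have hhc : Continuous (fun u : ℝ => u ^ p * f u) :=
    (Real.continuous_rpow_const hp.1).mul hfc
  have hlip := lip_all (fun u : ℝ => u ^ p * f u) L hhc
    (fun x hx => (hp_hasDerivAt f hfd p hx).differentiableAt) (hLb p hp)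
  -- substitution u = b1 * v + e
  have hsub : (∫ u, deriv K1 ((u - e) / b1) * (u ^ p * f u))
      = b1 * ∫ v, deriv K1 v * ((b1 * v + e) ^ p * f (b1 * v + e)) := by
    have h1 : (∫ v, deriv K1 ((b1 * v + e - e) / b1) * ((b1 * v + e) ^ p * f (b1 * v + e)))
        = |b1⁻¹| • ∫ u, deriv K1 ((u - e) / b1) * (u ^ p * f u) := by
      have h1' := Measure.integral_comp_mul_left
        (fun y : ℝ => deriv K1 ((y + e - e) / b1) * ((y + e) ^ p * f (y + e))) b1
      rw [h1']
      rw [integral_add_right_eq_self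
        (fun u : ℝ => deriv K1 ((u - e) / b1) * (u ^ p * f u)) e]
    have h2 : ∀ v : ℝ, (b1 * v + e - e) / b1 = v := by
      intro v; field_simp; ring
    simp only [h2] at h1
    rw [abs_of_pos (inv_pos.mpr hb1), smul_eq_mul] at h1
    rw [h1, ← mul_assoc, mul_inv_cancel₀ (ne_of_gt hb1), one_mul]
  have hcont2 : Continuous (fun v : ℝ => (b1 * v + e) ^ p * f (b1 * v + e)) :=
    hhc.comp ((continuous_const.mul continuous_id).add continuous_const)
  have I1 : Integrable (fun v : ℝ => deriv K1 v * ((b1 * v + e) ^ p * f (b1 * v + e))) :=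
    (hKdC.mul hcont2).integrable_of_hasCompactSupport hKds.mul_right
  have I2 : Integrable (fun v : ℝ => deriv K1 v * (e ^ p * f e)) :=
    (hKdC.mul continuous_const).integrable_of_hasCompactSupport hKds.mul_right
  have I3 : Integrable
      (fun v : ℝ => deriv K1 v * ((b1 * v + e) ^ p * f (b1 * v + e) - e ^ p * f e)) :=
    (hKdC.mul (hcont2.sub continuous_const)).integrable_of_hasCompactSupport hKds.mul_right
  have hzero : ∫ v, deriv K1 v * (e ^ p * f e) = 0 := by
    rw [integral_mul_const, hKd0, zero_mul]
  have hXeq : (∫ v, deriv K1 v * ((b1 * v + e) ^ p * f (b1 * v + e)))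
      = ∫ v, deriv K1 v * ((b1 * v + e) ^ p * f (b1 * v + e) - e ^ p * f e) := by
    have hfe : (fun v : ℝ => deriv K1 v * ((b1 * v + e) ^ p * f (b1 * v + e) - e ^ p * f e))
        = fun v : ℝ => deriv K1 v * ((b1 * v + e) ^ p * f (b1 * v + e))
            - deriv K1 v * (e ^ p * f e) := funext fun v => by ring
    rw [hfe, integral_sub I1 I2, hzero, sub_zero]
  have hbound : |∫ v, deriv K1 v * ((b1 * v + e) ^ p * f (b1 * v + e) - e ^ p * f e)|
      ≤ L * b1 * J := by
    have hptw : ∀ v : ℝ,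
        |deriv K1 v * ((b1 * v + e) ^ p * f (b1 * v + e) - e ^ p * f e)|
          ≤ (L * b1) * (|v| * |deriv K1 v|) := by
      intro v
      rw [abs_mul]
      have h1 : |(b1 * v + e) ^ p * f (b1 * v + e) - e ^ p * f e| ≤ L * (b1 * |v|) := by
        have hl := hlip (b1 * v + e) e
        simpa [add_sub_cancel_right, abs_mul, abs_of_pos hb1] using hl
      calc |deriv K1 v| * |(b1 * v + e) ^ p * f (b1 * v + e) - e ^ p * f e|
          ≤ |deriv K1 v| * (L * (b1 * |v|)) :=
            mul_le_mul_of_nonneg_left h1 (abs_nonneg _)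
        _ = (L * b1) * (|v| * |deriv K1 v|) := by ring
    calc |∫ v, deriv K1 v * ((b1 * v + e) ^ p * f (b1 * v + e) - e ^ p * f e)|
        ≤ ∫ v, |deriv K1 v * ((b1 * v + e) ^ p * f (b1 * v + e) - e ^ p * f e)| :=
          by simpa only [Real.norm_eq_abs] using norm_integral_le_integral_norm (μ := volume) (fun v : ℝ => deriv K1 v * ((b1 * v + e) ^ p * f (b1 * v + e) - e ^ p * f e))
      _ ≤ ∫ v, (L * b1) * (|v| * |deriv K1 v|) :=
          integral_mono I3.abs (hJint.const_mul _) hptw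
      _ = L * b1 * J := by rw [integral_const_mul]
  calc |∫ u, deriv K1 ((u - e) / b1) * (u ^ p * f u)|
      = b1 * |∫ v, deriv K1 v * ((b1 * v + e) ^ p * f (b1 * v + e))| := by
        rw [hsub, abs_mul, abs_of_pos hb1]
    _ ≤ b1 * (L * b1 * J) := by
        rw [hXeq]; exact mul_le_mul_of_nonneg_left hbound hb1.le
    _ = (L * J) * b1 ^ 2 := by ring
    _ ≤ (L * J + 1) * b1 ^ 2 := by nlinarith [sq_nonneg b1]
end

section
/- There exists a constant C > 0 such that for every e ∈ ℝ, every p ∈ [0,2], every b_1 > 0 and every ℓ ∈ {2,3}, |∫ K_1^{(ℓ)}((ε̃ − e)/b_1) ε̃^p f(ε̃) dε̃| ≤ C b_1^3 (Lemma 4, second- and third-derivative bounds). -/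
set_option maxHeartbeats 1000000

open MeasureTheory Real

/-- Mean value inequality on the whole line. -/
private lemma lip_of_hasDerivAt {G G' : ℝ → ℝ} {M : ℝ}
    (hd : ∀ x, HasDerivAt G (G' x) x) (hb : ∀ x, |G' x| ≤ M) (a b : ℝ) :
    |G b - G a| ≤ M * |b - a| := by
  have := convex_univ.norm_image_sub_le_of_norm_hasDerivWithin_le
    (f := G) (f' := G') (C := M)
    (fun x _ => (hd x).hasDerivWithinAt) (fun x _ => by simpa [Real.norm_eq_abs] using hb x)
    (Set.mem_univ a) (Set.mem_univ b)
  simpa [Real.norm_eq_abs] using this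

/-- Second-order Taylor bound from a uniform bound on the second derivative. -/
private lemma taylor2_bound {G G1 G2 : ℝ → ℝ} {M : ℝ} (hM : 0 ≤ M)
    (hd1 : ∀ x, HasDerivAt G (G1 x) x) (hd2 : ∀ x, HasDerivAt G1 (G2 x) x)
    (hb : ∀ x, |G2 x| ≤ M) (e t : ℝ) :
    |G (e + t) - G e - t * G1 e| ≤ M * t ^ 2 := by
  have hlip : ∀ a b : ℝ, |G1 b - G1 a| ≤ M * |b - a| := lip_of_hasDerivAt hd2 hb
  have hφd : ∀ s : ℝ, HasDerivAt (fun s : ℝ => G (e + s) - G e - s * G1 e)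
      (G1 (e + s) - G1 e) s := by
    intro s
    have h1 : HasDerivAt (fun s : ℝ => G (e + s)) (G1 (e + s)) s := by
      have := (hd1 (e + s)).comp s ((hasDerivAt_id s).const_add e)
      exact this.congr_deriv (by ring)
    exact ((h1.sub_const (G e)).sub ((hasDerivAt_id s).mul_const (G1 e))).congr_deriv (by ring)
  have h0mem : (0:ℝ) ∈ Set.Icc (min 0 t) (max 0 t) := ⟨min_le_left _ _, le_max_left _ _⟩
  have htmem : t ∈ Set.Icc (min 0 t) (max 0 t) := ⟨min_le_right _ _, le_max_right _ _⟩
  have key := (convex_Icc (min 0 t) (max 0 t)).norm_image_sub_le_of_norm_hasDerivWithin_le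
      (f := fun s : ℝ => G (e + s) - G e - s * G1 e) (f' := fun s => G1 (e + s) - G1 e)
      (C := M * |t|)
      (fun x _ => (hφd x).hasDerivWithinAt)
      (fun x hx => by
        have hxt : |x| ≤ |t| := abs_le.mpr
          ⟨le_trans (le_min (neg_nonpos.mpr (abs_nonneg t)) (neg_abs_le t)) hx.1,
           le_trans hx.2 (max_le (abs_nonneg t) (le_abs_self t))⟩
        have h1 : |G1 (e + x) - G1 e| ≤ M * |x| := by
          have := hlip e (e + x)
          simpa using this
        calc ‖G1 (e + x) - G1 e‖ ≤ M * |x| := by simpa [Real.norm_eq_abs] using h1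
          _ ≤ M * |t| := mul_le_mul_of_nonneg_left hxt hM)
      h0mem htmem
  have : |(G (e + t) - G e - t * G1 e) - (G (e + 0) - G e - 0 * G1 e)| ≤ M * |t| * |t - 0| := by
    simpa [Real.norm_eq_abs] using key
  calc |G (e + t) - G e - t * G1 e|
      = |(G (e + t) - G e - t * G1 e) - (G (e + 0) - G e - 0 * G1 e)| := by norm_num
    _ ≤ M * |t| * |t - 0| := this
    _ = M * t ^ 2 := by rw [sub_zero, mul_assoc, abs_mul_abs_self, sq]

private lemma hcs_iteratedDeriv {K : ℝ → ℝ} (h : HasCompactSupport K) (n : ℕ) :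
    HasCompactSupport (iteratedDeriv n K) := by
  induction n with
  | zero => simpa [iteratedDeriv_zero] using h
  | succ n ih => rw [iteratedDeriv_succ]; exact ih.deriv

/-- Lemma 4, second- and third-derivative bounds: there exists `C > 0`
such that for every `e ∈ ℝ`, every `p ∈ [0,2]`, every `b1 > 0` and every `ℓ ∈ {2,3}`,
`|∫ K1^{(ℓ)}((u - e)/b1) u^p f(u) du| ≤ C b1³`. -/
theorem lemma4_higher_derivative_bounds
    (f K1 : ℝ → ℝ)
    -- f is a probability density function on ℝ
    (hf_nonneg : ∀ x, 0 ≤ f x)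
    (hf_int : ∫ x, f x = 1)
    -- f has bounded continuous second-order derivatives
    (hf_C2 : ContDiff ℝ 2 f)
    (hf_bd : ∀ k, k ≤ 2 → ∃ C : ℝ, ∀ x : ℝ, |iteratedDeriv k f x| ≤ C)
    -- the functions h_p(e) = e^p f(e) have bounded derivatives up to order 2
    (hhp_bd : ∀ p ∈ Set.Icc (0:ℝ) 2, ∀ k, k ≤ 2 →
      ∃ C : ℝ, ∀ e : ℝ, |iteratedDeriv k (fun u : ℝ => u ^ p * f u) e| ≤ C)
    -- K1 is a symmetric, compactly supported, C³ kernel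
    (hK1_symm : ∀ v, K1 (-v) = K1 v)
    (hK1_supp : HasCompactSupport K1)
    (hK1_C3 : ContDiff ℝ 3 K1)
    (hK1_int : ∫ v, K1 v = 1)
    (hK1_deriv_int : ∀ ℓ ∈ ({1,2,3} : Set ℕ), ∫ v, iteratedDeriv ℓ K1 v = 0)
    (hK1_vderiv_int : ∀ ℓ ∈ ({2,3} : Set ℕ), ∫ v, v * iteratedDeriv ℓ K1 v = 0) :
    ∃ C > (0:ℝ), ∀ (e p b1 : ℝ), p ∈ Set.Icc (0:ℝ) 2 → 0 < b1 →
      ∀ ℓ ∈ ({2,3} : Set ℕ),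
      |∫ u, iteratedDeriv ℓ K1 ((u - e) / b1) * (u ^ p * f u)| ≤ C * b1^3 := by
  -- basic differentiability facts for f
  have hfd : Differentiable ℝ f := hf_C2.differentiable (by norm_num)
  have hfd1 : Differentiable ℝ (deriv f) := by
    have := hf_C2.differentiable_iteratedDeriv 1 (by norm_num)
    simpa [iteratedDeriv_one] using this
  -- bounds on f and its derivatives
  obtain ⟨A0, hA0'⟩ := hf_bd 0 (by norm_num)
  obtain ⟨A1, hA1'⟩ := hf_bd 1 (by norm_num)
  obtain ⟨A2, hA2'⟩ := hf_bd 2 (by norm_num)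
  have hA0 : ∀ x, |f x| ≤ A0 := by
    intro x; simpa [iteratedDeriv_zero] using hA0' x
  have hA1 : ∀ x, |deriv f x| ≤ A1 := by
    intro x; simpa [iteratedDeriv_one] using hA1' x
  have hA2 : ∀ x, |deriv (deriv f) x| ≤ A2 := by
    intro x
    have := hA2' x
    rwa [iteratedDeriv_succ, iteratedDeriv_one] at this
  have hA0nn : 0 ≤ A0 := le_trans (abs_nonneg _) (hA0 0)
  have hA1nn : 0 ≤ A1 := le_trans (abs_nonneg _) (hA1 0)
  have hA2nn : 0 ≤ A2 := le_trans (abs_nonneg _) (hA2 0)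
  -- first derivative of u ↦ u^p * f u away from 0
  have hD : ∀ (p : ℝ) (u : ℝ), u ≠ 0 →
      HasDerivAt (fun u : ℝ => u ^ p * f u)
        (p * u ^ (p-1) * f u + u ^ p * deriv f u) u := by
    intro p u hu
    exact (Real.hasDerivAt_rpow_const (p := p) (Or.inl hu)).mul ((hfd u).hasDerivAt)
  -- second derivative formula away from 0
  have hD2 : ∀ (p : ℝ) (u : ℝ), u ≠ 0 →
      HasDerivAt (fun u : ℝ => p * u ^ (p-1) * f u + u ^ p * deriv f u)
        (p * (p-1) * u ^ (p-2) * f u + 2*p * u ^ (p-1) * deriv f u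
          + u ^ p * deriv (deriv f) u) u := by
    intro p u hu
    have h1 : HasDerivAt (fun u : ℝ => p * u ^ (p-1) * f u)
        ((p * ((p-1) * u^(p-1-1))) * f u + (p * u^(p-1)) * deriv f u) u :=
      ((Real.hasDerivAt_rpow_const (p := p-1) (Or.inl hu)).const_mul p).mul ((hfd u).hasDerivAt)
    have h2 : HasDerivAt (fun u : ℝ => u ^ p * deriv f u)
        ((p * u^(p-1)) * deriv f u + u^p * deriv (deriv f) u) u :=
      (Real.hasDerivAt_rpow_const (Or.inl hu)).mul ((hfd1 u).hasDerivAt)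
    have h3 := h1.add h2
    have e1 : p - 1 - 1 = p - 2 := by ring
    rw [e1] at h3
    exact h3.congr_deriv (by ring)
  -- iterated derivative formula away from 0
  have hit2 : ∀ (p : ℝ) (u : ℝ), u ≠ 0 →
      iteratedDeriv 2 (fun u : ℝ => u ^ p * f u) u
        = p * (p-1) * u ^ (p-2) * f u + 2*p * u ^ (p-1) * deriv f u
          + u ^ p * deriv (deriv f) u := by
    intro p u hu
    have hne : {x : ℝ | x ≠ 0} ∈ nhds u := by
      exact isOpen_ne.mem_nhds hu
    have hev : deriv (fun u : ℝ => u ^ p * f u)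
        =ᶠ[nhds u] (fun u : ℝ => p * u ^ (p-1) * f u + u ^ p * deriv f u) := by
      filter_upwards [hne] with x hx
      exact (hD p x hx).deriv
    have h2 : HasDerivAt (deriv (fun u : ℝ => u ^ p * f u))
        (p * (p-1) * u ^ (p-2) * f u + 2*p * u ^ (p-1) * deriv f u
          + u ^ p * deriv (deriv f) u) u :=
      (hD2 p u hu).congr_of_eventuallyEq hev
    rw [iteratedDeriv_succ, iteratedDeriv_one]
    exact h2.deriv
  -- f vanishes at 0
  have hf0 : f 0 = 0 := by
    obtain ⟨Ch, hCh⟩ := hhp_bd (1/2) ⟨by norm_num, by norm_num⟩ 2 le_rfl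
    have hChnn : 0 ≤ Ch := le_trans (abs_nonneg _) (hCh 0)
    have key : ∀ u : ℝ, 0 < u →
        f u = 4*(u * deriv f u + u^2 * deriv (deriv f) u
          - u^((3:ℝ)/2) * iteratedDeriv 2 (fun u : ℝ => u ^ ((1:ℝ)/2) * f u) u) := by
      intro u hu
      rw [hit2 (1/2) u hu.ne']
      have e1 : u ^ ((3:ℝ)/2) * u ^ ((1:ℝ)/2 - 2) = 1 := by
        rw [← Real.rpow_add hu]; norm_num
      have e2 : u ^ ((3:ℝ)/2) * u ^ ((1:ℝ)/2 - 1) = u := by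
        rw [← Real.rpow_add hu]; norm_num
      have e3 : u ^ ((3:ℝ)/2) * u ^ ((1:ℝ)/2) = u ^ 2 := by
        rw [← Real.rpow_add hu]
        norm_num
      linear_combination (-(f u)) * e1 + (4 * deriv f u) * e2 + (4 * deriv (deriv f) u) * e3
    have hb : ∀ u ∈ Set.Ioc (0:ℝ) 1, |f u| ≤ u * (4*A1 + 4*A2 + 4*Ch) := by
      intro u hu
      obtain ⟨hu0, hu1⟩ := hu
      rw [key u hu0]
      have h1 : |u * deriv f u| ≤ u * A1 := by
        rw [abs_mul, abs_of_pos hu0]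
        exact mul_le_mul_of_nonneg_left (hA1 u) hu0.le
      have h2 : |u^2 * deriv (deriv f) u| ≤ u * A2 := by
        rw [abs_mul, abs_of_pos (pow_pos hu0 2)]
        calc u^2 * |deriv (deriv f) u| ≤ u^2 * A2 :=
              mul_le_mul_of_nonneg_left (hA2 u) (by positivity)
          _ ≤ u * A2 := by nlinarith [mul_nonneg (mul_nonneg hA2nn hu0.le) (sub_nonneg.mpr hu1)]
      have h3 : |u^((3:ℝ)/2) * iteratedDeriv 2 (fun u : ℝ => u ^ ((1:ℝ)/2) * f u) u|
          ≤ u * Ch := by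
        rw [abs_mul, abs_of_nonneg (Real.rpow_nonneg hu0.le _)]
        calc u^((3:ℝ)/2) * |iteratedDeriv 2 (fun u : ℝ => u ^ ((1:ℝ)/2) * f u) u|
            ≤ u^((3:ℝ)/2) * Ch :=
              mul_le_mul_of_nonneg_left (hCh u) (Real.rpow_nonneg hu0.le _)
          _ ≤ u * Ch := by
              apply mul_le_mul_of_nonneg_right _ hChnn
              calc u^((3:ℝ)/2) ≤ u^(1:ℝ) :=
                    Real.rpow_le_rpow_of_exponent_ge hu0 hu1 (by norm_num)
                _ = u := Real.rpow_one u
      calc |4*(u * deriv f u + u^2 * deriv (deriv f) u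
              - u^((3:ℝ)/2) * iteratedDeriv 2 (fun u : ℝ => u ^ ((1:ℝ)/2) * f u) u)|
          ≤ 4 * (|u * deriv f u| + |u^2 * deriv (deriv f) u|
              + |u^((3:ℝ)/2) * iteratedDeriv 2 (fun u : ℝ => u ^ ((1:ℝ)/2) * f u) u|) := by
            rw [abs_mul]
            have : |(4:ℝ)| = 4 := by norm_num
            rw [this]
            have := abs_sub (u * deriv f u + u^2 * deriv (deriv f) u)
              (u^((3:ℝ)/2) * iteratedDeriv 2 (fun u : ℝ => u ^ ((1:ℝ)/2) * f u) u)
            have habc := abs_add_le (u * deriv f u) (u^2 * deriv (deriv f) u)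
            nlinarith [abs_nonneg (u * deriv f u)]
        _ ≤ 4 * (u * A1 + u * A2 + u * Ch) := by linarith
        _ = u * (4*A1 + 4*A2 + 4*Ch) := by ring
    -- pass to the limit u → 0⁺
    have h1 : Filter.Tendsto (fun u => |f u|) (nhdsWithin 0 (Set.Ioi (0:ℝ))) (nhds (|f 0|)) :=
      ((continuous_abs.comp hfd.continuous).tendsto 0).mono_left nhdsWithin_le_nhds
    have h2 : Filter.Tendsto (fun u : ℝ => u * (4*A1 + 4*A2 + 4*Ch))
        (nhdsWithin 0 (Set.Ioi (0:ℝ))) (nhds 0) := by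
      have hc : Continuous (fun u : ℝ => u * (4*A1 + 4*A2 + 4*Ch)) :=
        continuous_id.mul continuous_const
      have := (hc.tendsto 0).mono_left (nhdsWithin_le_nhds (s := Set.Ioi (0:ℝ)))
      simpa using this
    have hev : ∀ᶠ u in nhdsWithin (0:ℝ) (Set.Ioi 0), |f u| ≤ u * (4*A1 + 4*A2 + 4*Ch) := by
      filter_upwards [Ioc_mem_nhdsGT_of_mem (Set.mem_Ico.mpr ⟨le_refl (0:ℝ), zero_lt_one⟩)]
        with u hu using hb u hu
    have := le_of_tendsto_of_tendsto h1 h2 hev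
    exact abs_eq_zero.mp (le_antisymm this (abs_nonneg _))
  -- derivative of f vanishes at 0
  have hf'0 : deriv f 0 = 0 := by
    have hmin : IsLocalMin f 0 :=
      Filter.Eventually.of_forall (fun x => by rw [hf0]; exact hf_nonneg x)
    exact hmin.deriv_eq_zero
  -- global quadratic bounds on f near everywhere
  have hfq : ∀ u : ℝ, |f u| ≤ A2 * u ^ 2 := by
    intro u
    have := taylor2_bound hA2nn (fun x => (hfd x).hasDerivAt)
      (fun x => (hfd1 x).hasDerivAt) hA2 0 u
    simpa [hf0, hf'0] using this
  have hf'l : ∀ u : ℝ, |deriv f u| ≤ A2 * |u| := by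
    intro u
    have := lip_of_hasDerivAt (fun x => (hfd1 x).hasDerivAt) hA2 0 u
    simpa [hf'0] using this
  -- bound on |u * f'(u)|
  obtain ⟨C1, hC1⟩ := hhp_bd 1 ⟨zero_le_one, one_le_two⟩ 1 (by norm_num)
  have hfun1 : (fun u : ℝ => u ^ (1:ℝ) * f u) = fun u : ℝ => u * f u := by
    funext u; rw [Real.rpow_one]
  have hd1' : ∀ u : ℝ, HasDerivAt (fun u : ℝ => u * f u) (f u + u * deriv f u) u := by
    intro u
    have := (hasDerivAt_id u).mul ((hfd u).hasDerivAt)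
    exact this.congr_deriv (by simp)
  have hB1 : ∀ u : ℝ, |u * deriv f u| ≤ C1 + A0 := by
    intro u
    have h := hC1 u
    rw [hfun1, iteratedDeriv_one, (hd1' u).deriv] at h
    have h0 := abs_le.mp (hA0 u)
    have hh := abs_le.mp h
    exact abs_le.mpr ⟨by linarith, by linarith⟩
  have hB1nn : 0 ≤ C1 + A0 := le_trans (abs_nonneg _) (hB1 0)
  -- bound on |u^2 * f''(u)|
  obtain ⟨C2, hC2⟩ := hhp_bd 2 ⟨by norm_num, le_refl 2⟩ 2 le_rfl
  have hfun2 : (fun u : ℝ => u ^ (2:ℝ) * f u) = fun u : ℝ => u * u * f u := by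
    funext u
    rw [show ((2:ℝ)) = ((2:ℕ):ℝ) by norm_num, Real.rpow_natCast]
    ring
  have hGa : ∀ u : ℝ, HasDerivAt (fun y : ℝ => y * y * f y) (2*u*(f u) + u*u*deriv f u) u := by
    intro u
    have := ((hasDerivAt_id u).mul (hasDerivAt_id u)).mul ((hfd u).hasDerivAt)
    simp only [id_eq, one_mul, mul_one] at this
    exact this.congr_deriv (by simp only [Pi.mul_apply, id_eq]; ring)
  have hGb : ∀ u : ℝ, HasDerivAt (fun y : ℝ => 2*y*(f y) + y*y*deriv f y)
      (2*(f u) + 4*(u*deriv f u) + u*u*deriv (deriv f) u) u := by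
    intro u
    have h1 := ((hasDerivAt_id u).const_mul (2:ℝ)).mul ((hfd u).hasDerivAt)
    have h2 := ((hasDerivAt_id u).mul (hasDerivAt_id u)).mul ((hfd1 u).hasDerivAt)
    have h3 := h1.add h2
    simp only [id_eq, one_mul, mul_one] at h3
    exact h3.congr_deriv (by simp only [Pi.mul_apply, id_eq]; ring)
  have hB2 : ∀ u : ℝ, |u * u * deriv (deriv f) u| ≤ C2 + 2*A0 + 4*(C1 + A0) := by
    intro u
    have h := hC2 u
    rw [hfun2, iteratedDeriv_succ, iteratedDeriv_one] at h
    have hda : deriv (fun y : ℝ => y * y * f y) = fun y : ℝ => 2*y*(f y) + y*y*deriv f y :=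
      funext fun y => (hGa y).deriv
    rw [hda, (hGb u).deriv] at h
    have h0 := abs_le.mp (hA0 u)
    have hb1 := abs_le.mp (hB1 u)
    have hh := abs_le.mp h
    exact abs_le.mpr ⟨by linarith, by linarith⟩
  have hB2nn : 0 ≤ C2 + 2*A0 + 4*(C1 + A0) := le_trans (abs_nonneg _) (hB2 0)
  -- derivative of u ↦ u^p * f u everywhere, for p ∈ [0,2]
  have hg1d : ∀ p ∈ Set.Icc (0:ℝ) 2, ∀ u : ℝ,
      HasDerivAt (fun u : ℝ => u ^ p * f u)
        (p * u ^ (p-1) * f u + u ^ p * deriv f u) u := by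
    intro p hp u
    rcases eq_or_ne u 0 with rfl | hu
    · rcases eq_or_lt_of_le hp.1 with hp0 | hp0
      · subst hp0
        have hfeq : (fun u : ℝ => u ^ (0:ℝ) * f u) = f :=
          funext fun u => by rw [Real.rpow_zero, one_mul]
        rw [hfeq]
        have hval : (0:ℝ) * (0:ℝ)^((0:ℝ)-1) * f 0 + (0:ℝ)^(0:ℝ) * deriv f 0 = deriv f 0 := by
          norm_num
        rw [hval]
        exact (hfd 0).hasDerivAt
      · have hval : p * (0:ℝ)^(p-1) * f 0 + (0:ℝ)^p * deriv f 0 = 0 := by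
          rw [hf0, hf'0]; ring
        rw [hval, hasDerivAt_iff_tendsto_slope]
        apply squeeze_zero_norm (a := fun u : ℝ => A2 * |u| ^ (p+1))
        · intro u
          rcases eq_or_ne u 0 with rfl | hu
          · rw [slope_same]
            simp only [norm_zero]
            positivity
          · rw [slope_def_field, hf0, mul_zero, sub_zero, sub_zero, Real.norm_eq_abs, abs_div,
              abs_mul]
            have h1 : |u ^ p| ≤ |u| ^ p := Real.abs_rpow_le_abs_rpow u p
            have h2 : |f u| ≤ A2 * u^2 := hfq u
            have habs : (0:ℝ) < |u| := abs_pos.mpr hu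
            calc |u ^ p| * |f u| / |u| ≤ (|u| ^ p * (A2 * u^2)) / |u| := by
                  gcongr
              _ = A2 * |u| ^ (p+1) := by
                  rw [show u^2 = |u| * |u| by rw [pow_two, ← abs_mul_abs_self],
                    Real.rpow_add_one (abs_ne_zero.mpr hu)]
                  field_simp
        · have hc' : ContinuousAt (fun x : ℝ => |x| ^ (p+1)) 0 :=
            (Real.continuousAt_rpow_const |(0:ℝ)| (p+1)
              (Or.inr (by positivity))).comp continuous_abs.continuousAt
          have hc : ContinuousAt (fun x : ℝ => A2 * |x| ^ (p+1)) 0 :=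
            continuousAt_const.mul hc' 
          have := hc.tendsto.mono_left (nhdsWithin_le_nhds (s := {(0:ℝ)}ᶜ))
          simpa [Real.zero_rpow (by positivity : p+1 ≠ 0)] using this
    · exact hD p u hu
  -- second derivative of u ↦ u^p * f u everywhere, for p ∈ [0,2]
  have hg2d : ∀ p ∈ Set.Icc (0:ℝ) 2, ∀ u : ℝ,
      HasDerivAt (fun u : ℝ => p * u ^ (p-1) * f u + u ^ p * deriv f u)
        (p * (p-1) * u ^ (p-2) * f u + 2*p * u ^ (p-1) * deriv f u
          + u ^ p * deriv (deriv f) u) u := by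
    intro p hp u
    rcases eq_or_ne u 0 with rfl | hu
    · rcases eq_or_lt_of_le hp.1 with hp0 | hp0
      · subst hp0
        have hfeq : (fun u : ℝ => (0:ℝ) * u ^ ((0:ℝ)-1) * f u + u ^ (0:ℝ) * deriv f u)
            = deriv f := funext fun u => by rw [Real.rpow_zero]; ring
        rw [hfeq]
        have hval : (0:ℝ) * ((0:ℝ)-1) * (0:ℝ)^((0:ℝ)-2) * f 0
            + 2*0 * (0:ℝ)^((0:ℝ)-1) * deriv f 0 + (0:ℝ)^(0:ℝ) * deriv (deriv f) 0
            = deriv (deriv f) 0 := by norm_num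
        rw [hval]
        exact (hfd1 0).hasDerivAt
      · have hval : p * (p-1) * (0:ℝ)^(p-2) * f 0 + 2*p * (0:ℝ)^(p-1) * deriv f 0
            + (0:ℝ)^p * deriv (deriv f) 0 = 0 := by
          rw [hf0, hf'0, Real.zero_rpow hp0.ne']; ring
        rw [hval, hasDerivAt_iff_tendsto_slope]
        apply squeeze_zero_norm (a := fun u : ℝ => 3 * A2 * |u| ^ p)
        · intro u
          rcases eq_or_ne u 0 with rfl | hu
          · rw [slope_same]
            simp only [norm_zero]
            positivity
          · have habs : (0:ℝ) < |u| := abs_pos.mpr hu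
            have hG0 : p * (0:ℝ)^(p-1) * f 0 + (0:ℝ)^p * deriv f 0 = 0 := by
              rw [hf0, hf'0]; ring
            rw [slope_def_field, hG0, sub_zero, sub_zero, Real.norm_eq_abs, abs_div]
            have e1 : |u| ^ (p+1) = |u| ^ (p-1) * u^2 := by
              rw [show p+1 = (p-1)+2 by ring, Real.rpow_add habs,
                show ((2:ℝ)) = ((2:ℕ):ℝ) by norm_num, Real.rpow_natCast, sq_abs]
            have e2 : |u| ^ (p+1) = |u| ^ p * |u| := by
              rw [Real.rpow_add_one (abs_ne_zero.mpr hu)]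
            have hnum : |p * u ^ (p-1) * f u + u ^ p * deriv f u| ≤ 3 * A2 * |u| ^ (p+1) := by
              have h1 : |u ^ (p-1)| ≤ |u| ^ (p-1) := Real.abs_rpow_le_abs_rpow u (p-1)
              have h2 : |u ^ p| ≤ |u| ^ p := Real.abs_rpow_le_abs_rpow u p
              have hpa : |p| ≤ 2 := by
                rw [abs_of_nonneg hp.1]; exact hp.2
              calc |p * u ^ (p-1) * f u + u ^ p * deriv f u|
                  ≤ |p * u ^ (p-1) * f u| + |u ^ p * deriv f u| := abs_add_le _ _
                _ = |p| * |u ^ (p-1)| * |f u| + |u ^ p| * |deriv f u| := by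
                    rw [abs_mul, abs_mul, abs_mul]
                _ ≤ 2 * |u| ^ (p-1) * (A2 * u^2) + |u| ^ p * (A2 * |u|) := by
                    gcongr
                    · exact hfq u
                    · exact hf'l u
                _ = 3 * A2 * |u| ^ (p+1) := by
                    linear_combination (-2*A2) * e1 + (-A2) * e2
            calc |p * u ^ (p-1) * f u + u ^ p * deriv f u| / |u|
                ≤ (3 * A2 * |u| ^ (p+1)) / |u| := (div_le_div_iff_of_pos_right habs).mpr hnum
              _ = 3 * A2 * |u| ^ p := by
                  rw [e2]
                  field_simp
        · have hc' : ContinuousAt (fun x : ℝ => |x| ^ p) 0 :=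
            (Real.continuousAt_rpow_const |(0:ℝ)| p
              (Or.inr hp.1)).comp continuous_abs.continuousAt
          have hc : ContinuousAt (fun x : ℝ => 3 * A2 * |x| ^ p) 0 :=
            continuousAt_const.mul hc' 
          have := hc.tendsto.mono_left (nhdsWithin_le_nhds (s := {(0:ℝ)}ᶜ))
          simpa [Real.zero_rpow hp0.ne'] using this
    · exact hD2 p u hu
  -- uniform bound on the second derivative, for p ∈ [0,2]
  have hg2b : ∀ p ∈ Set.Icc (0:ℝ) 2, ∀ u : ℝ,
      |p * (p-1) * u ^ (p-2) * f u + 2*p * u ^ (p-1) * deriv f u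
        + u ^ p * deriv (deriv f) u|
      ≤ 7*A2 + 2*A0 + 4*(C1+A0) + (C2 + 2*A0 + 4*(C1+A0)) := by
    intro p hp u
    have hpa : |p| ≤ 2 := by rw [abs_of_nonneg hp.1]; exact hp.2
    have hpb : |p-1| ≤ 1 := abs_le.mpr ⟨by linarith [hp.1], by linarith [hp.2]⟩
    have hpp : |p * (p-1)| ≤ 2*1 := by
      rw [abs_mul]; exact mul_le_mul hpa hpb (abs_nonneg _) (by norm_num)
    have h2p : |2*p| ≤ 4 := by
      rw [abs_mul]
      have : |(2:ℝ)| = 2 := by norm_num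
      rw [this]; linarith
    rcases eq_or_ne u 0 with rfl | hu
    · have hval : p * (p-1) * (0:ℝ)^(p-2) * f 0 + 2*p * (0:ℝ)^(p-1) * deriv f 0
          + (0:ℝ)^p * deriv (deriv f) 0 = (0:ℝ)^p * deriv (deriv f) 0 := by
        rw [hf0, hf'0]; ring
      rw [hval, abs_mul]
      have h0p : |(0:ℝ)^p| ≤ 1 := by
        rcases eq_or_ne p 0 with rfl | hp0
        · simp
        · simp [Real.zero_rpow hp0]
      have := mul_le_mul h0p (hA2 0) (abs_nonneg _) zero_le_one
      rw [one_mul] at this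
      linarith [hA0nn, hA2nn, hB1nn, hB2nn]
    · have habs : (0:ℝ) < |u| := abs_pos.mpr hu
      have h1 : |u ^ (p-2)| ≤ |u| ^ (p-2) := Real.abs_rpow_le_abs_rpow u (p-2)
      have h2 : |u ^ (p-1)| ≤ |u| ^ (p-1) := Real.abs_rpow_le_abs_rpow u (p-1)
      have h3 : |u ^ p| ≤ |u| ^ p := Real.abs_rpow_le_abs_rpow u p
      have habs3 := abs_add_le (p * (p-1) * u ^ (p-2) * f u + 2*p * u ^ (p-1) * deriv f u)
        (u ^ p * deriv (deriv f) u)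
      have habs4 := abs_add_le (p * (p-1) * u ^ (p-2) * f u) (2*p * u ^ (p-1) * deriv f u)
      rcases le_or_gt |u| 1 with hle | hgt
      · -- small u
        have ea : |u| ^ p = |u| ^ (p-2) * u^2 := by
          conv_lhs => rw [show p = (p-2)+2 by ring]
          rw [Real.rpow_add habs, show ((2:ℝ)) = ((2:ℕ):ℝ) by norm_num,
            Real.rpow_natCast, sq_abs]
        have eb : |u| ^ p = |u| ^ (p-1) * |u| := by
          conv_lhs => rw [show p = (p-1)+1 by ring]
          rw [Real.rpow_add habs, Real.rpow_one]
        have hup1 : |u| ^ p ≤ 1 := Real.rpow_le_one (abs_nonneg u) hle hp.1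
        have t1 : |p * (p-1) * u ^ (p-2) * f u| ≤ 2 * A2 := by
          rw [abs_mul, abs_mul]
          calc |p * (p-1)| * |u ^ (p-2)| * |f u|
              ≤ (2*1) * |u| ^ (p-2) * (A2 * u^2) := by
                gcongr
                all_goals first | exact h1 | exact hfq u | exact hpp
            _ = 2 * A2 * |u| ^ p := by rw [ea]; ring
            _ ≤ 2 * A2 := by nlinarith [hA2nn]
        have t2 : |2*p * u ^ (p-1) * deriv f u| ≤ 4 * A2 := by
          rw [abs_mul, abs_mul]
          calc |2*p| * |u ^ (p-1)| * |deriv f u|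
              ≤ 4 * |u| ^ (p-1) * (A2 * |u|) := by
                gcongr
                all_goals first | exact h2 | exact hf'l u | exact h2p
            _ = 4 * A2 * |u| ^ p := by rw [eb]; ring
            _ ≤ 4 * A2 := by nlinarith [hA2nn]
        have t3 : |u ^ p * deriv (deriv f) u| ≤ A2 := by
          rw [abs_mul]
          calc |u ^ p| * |deriv (deriv f) u| ≤ 1 * A2 :=
                mul_le_mul (le_trans h3 hup1) (hA2 u) (abs_nonneg _) zero_le_one
            _ = A2 := one_mul A2
        linarith [hB1nn, hB2nn, hA0nn]
      · -- large u
        have hge : (1:ℝ) ≤ |u| := hgt.le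
        have hu1 : |u| ^ (p-2) ≤ 1 :=
          Real.rpow_le_one_of_one_le_of_nonpos hge (by linarith [hp.2])
        have hu2 : |u| ^ (p-1) ≤ |u| := by
          calc |u| ^ (p-1) ≤ |u| ^ (1:ℝ) :=
                Real.rpow_le_rpow_of_exponent_le hge (by linarith [hp.2])
            _ = |u| := Real.rpow_one _
        have hu3 : |u| ^ p ≤ u^2 := by
          calc |u| ^ p ≤ |u| ^ (2:ℝ) := Real.rpow_le_rpow_of_exponent_le hge hp.2
            _ = u^2 := by
              rw [show ((2:ℝ)) = ((2:ℕ):ℝ) by norm_num, Real.rpow_natCast, sq_abs]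
        have t1 : |p * (p-1) * u ^ (p-2) * f u| ≤ 2 * A0 := by
          rw [abs_mul, abs_mul]
          calc |p * (p-1)| * |u ^ (p-2)| * |f u| ≤ (2*1) * 1 * A0 := by
                gcongr
                all_goals first | exact le_trans h1 hu1 | exact hA0 u | exact hpp
            _ = 2 * A0 := by ring
        have t2 : |2*p * u ^ (p-1) * deriv f u| ≤ 4 * (C1 + A0) := by
          rw [abs_mul, abs_mul]
          calc |2*p| * |u ^ (p-1)| * |deriv f u|
              ≤ 4 * |u| * |deriv f u| := by
                apply mul_le_mul_of_nonneg_right _ (abs_nonneg _)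
                exact mul_le_mul h2p (le_trans h2 hu2) (abs_nonneg _) (by norm_num)
            _ = 4 * |u * deriv f u| := by rw [abs_mul]; ring
            _ ≤ 4 * (C1 + A0) := by linarith [hB1 u]
        have t3 : |u ^ p * deriv (deriv f) u| ≤ C2 + 2*A0 + 4*(C1+A0) := by
          rw [abs_mul]
          have habs5 : |u * u * deriv (deriv f) u| = u^2 * |deriv (deriv f) u| := by
            rw [abs_mul, abs_mul, pow_two, ← abs_mul_abs_self u]
          calc |u ^ p| * |deriv (deriv f) u| ≤ u^2 * |deriv (deriv f) u| :=
                mul_le_mul_of_nonneg_right (le_trans h3 hu3) (abs_nonneg _)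
            _ = |u * u * deriv (deriv f) u| := habs5.symm
            _ ≤ C2 + 2*A0 + 4*(C1+A0) := hB2 u
        linarith [hA2nn]
  set M : ℝ := 7*A2 + 2*A0 + 4*(C1+A0) + (C2 + 2*A0 + 4*(C1+A0)) with hMdef
  have hMnn : 0 ≤ M :=
    le_trans (abs_nonneg _) (hg2b 0 ⟨le_refl 0, by norm_num⟩ 0)
  -- second-order Taylor estimate, uniform in p
  have htaylor : ∀ p ∈ Set.Icc (0:ℝ) 2, ∀ e t : ℝ,
      |(e+t) ^ p * f (e+t) - e ^ p * f e
        - t * (p * e ^ (p-1) * f e + e ^ p * deriv f e)| ≤ M * t^2 := by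
    intro p hp e t
    have := taylor2_bound hMnn (hg1d p hp) (hg2d p hp) (hg2b p hp) e t
    simpa using this
  -- the integral bounds
  have hJnn : ∀ ℓ : ℕ, 0 ≤ ∫ v : ℝ, v^2 * |iteratedDeriv ℓ K1 v| := by
    intro ℓ
    exact integral_nonneg (fun v => by positivity)
  refine ⟨M * ((∫ v : ℝ, v^2 * |iteratedDeriv 2 K1 v|)
    + (∫ v : ℝ, v^2 * |iteratedDeriv 3 K1 v|)) + 1, ?_, ?_⟩
  · have := mul_nonneg hMnn (add_nonneg (hJnn 2) (hJnn 3))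
    linarith
  intro e p b1 hp hb1 ℓ hℓ
  have hℓ' : ℓ = 2 ∨ ℓ = 3 := by simpa using hℓ
  set K : ℝ → ℝ := iteratedDeriv ℓ K1 with hKdef
  have hKJnn : 0 ≤ ∫ v : ℝ, v^2 * |K v| := hJnn ℓ
  have hKJle : (∫ v : ℝ, v^2 * |K v|) ≤ (∫ v : ℝ, v^2 * |iteratedDeriv 2 K1 v|)
      + (∫ v : ℝ, v^2 * |iteratedDeriv 3 K1 v|) := by
    rcases hℓ' with rfl | rfl
    · linarith [hJnn 3]
    · linarith [hJnn 2]
  have hKc : Continuous K := by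
    apply hK1_C3.continuous_iteratedDeriv ℓ
    rcases hℓ' with rfl | rfl <;> norm_num
  have hKs : HasCompactSupport K := hcs_iteratedDeriv hK1_supp ℓ
  have hKint : Integrable K := hKc.integrable_of_hasCompactSupport hKs
  have hKzero : (∫ v, K v) = 0 := hK1_deriv_int ℓ (by rcases hℓ' with rfl | rfl <;> simp)
  have hKvzero : (∫ v, v * K v) = 0 := hK1_vderiv_int ℓ hℓ
  have hhcont : Continuous (fun u : ℝ => u ^ p * f u) := by
    have hdif : Differentiable ℝ (fun u : ℝ => u ^ p * f u) :=
      fun u => (hg1d p hp u).differentiableAt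
    exact hdif.continuous
  -- substitution u = e + b1 * v
  have h3 : (∫ v : ℝ, K v * ((e + b1*v) ^ p * f (e + b1*v)))
      = ∫ v : ℝ, (fun w : ℝ => K ((w - e)/b1) * (w ^ p * f w)) (b1 * v + e) := by
    congr 1
    funext v
    simp only []
    rw [show (b1*v + e - e)/b1 = v by field_simp; ring, add_comm (b1*v) e]
  have h2 : (∫ v : ℝ, (fun w : ℝ => K ((w - e)/b1) * (w ^ p * f w)) (b1 * v + e))
      = |b1⁻¹| • ∫ w : ℝ, K ((w - e)/b1) * (w ^ p * f w) := by
    rw [show (fun v : ℝ => (fun w : ℝ => K ((w - e)/b1) * (w ^ p * f w)) (b1 * v + e))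
        = fun v : ℝ => (fun w : ℝ => K ((w + e - e)/b1) * ((w + e) ^ p * f (w + e))) (b1 * v)
        from rfl]
    rw [Measure.integral_comp_mul_left
      (fun w : ℝ => K ((w + e - e)/b1) * ((w + e) ^ p * f (w + e))) b1]
    congr 1
    exact integral_add_right_eq_self (fun w : ℝ => K ((w - e)/b1) * (w ^ p * f w)) e
  have hstepA : (∫ u : ℝ, K ((u - e)/b1) * (u ^ p * f u))
      = b1 * ∫ v : ℝ, K v * ((e + b1*v) ^ p * f (e + b1*v)) := by
    rw [h3, h2, smul_eq_mul, abs_of_pos (inv_pos.mpr hb1), ← mul_assoc,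
      mul_inv_cancel₀ hb1.ne', one_mul]
  -- splitting the integral
  have hint1 : Integrable (fun v : ℝ => K v * (e ^ p * f e)) := hKint.mul_const _
  have hvKcs : HasCompactSupport (fun v : ℝ => v * K v) :=
    HasCompactSupport.mul_left (f := fun v : ℝ => v) hKs
  have hvK : Integrable (fun v : ℝ =>
      (b1 * (p * e ^ (p-1) * f e + e ^ p * deriv f e)) * (v * K v)) := by
    apply Integrable.const_mul
    exact (continuous_id.mul hKc).integrable_of_hasCompactSupport hvKcs
  have hRcont : Continuous (fun v : ℝ => (e + b1*v) ^ p * f (e + b1*v) - e ^ p * f e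
      - (b1*v) * (p * e ^ (p-1) * f e + e ^ p * deriv f e)) := by
    apply Continuous.sub
    apply Continuous.sub
    · exact hhcont.comp (continuous_const.add (continuous_const.mul continuous_id))
    · exact continuous_const
    · exact (continuous_const.mul continuous_id).mul continuous_const
  have hint3 : Integrable (fun v : ℝ => K v * ((e + b1*v) ^ p * f (e + b1*v) - e ^ p * f e
      - (b1*v) * (p * e ^ (p-1) * f e + e ^ p * deriv f e))) :=
    (hKc.mul hRcont).integrable_of_hasCompactSupport hKs.mul_right
  have hsplit : (∫ v : ℝ, K v * ((e + b1*v) ^ p * f (e + b1*v)))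
      = (∫ v : ℝ, K v * (e ^ p * f e))
        + (∫ v : ℝ, (b1 * (p * e ^ (p-1) * f e + e ^ p * deriv f e)) * (v * K v))
        + ∫ v : ℝ, K v * ((e + b1*v) ^ p * f (e + b1*v) - e ^ p * f e
            - (b1*v) * (p * e ^ (p-1) * f e + e ^ p * deriv f e)) := by
    have h12 : Integrable (fun v : ℝ => K v * (e ^ p * f e)
        + (b1 * (p * e ^ (p-1) * f e + e ^ p * deriv f e)) * (v * K v)) := hint1.add hvK
    calc (∫ v : ℝ, K v * ((e + b1*v) ^ p * f (e + b1*v)))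
        = ∫ v : ℝ, ((K v * (e ^ p * f e)
            + (b1 * (p * e ^ (p-1) * f e + e ^ p * deriv f e)) * (v * K v))
            + K v * ((e + b1*v) ^ p * f (e + b1*v) - e ^ p * f e
              - (b1*v) * (p * e ^ (p-1) * f e + e ^ p * deriv f e))) := by
          congr 1
          funext v
          ring
      _ = (∫ v : ℝ, (K v * (e ^ p * f e)
            + (b1 * (p * e ^ (p-1) * f e + e ^ p * deriv f e)) * (v * K v)))
            + ∫ v : ℝ, K v * ((e + b1*v) ^ p * f (e + b1*v) - e ^ p * f e
              - (b1*v) * (p * e ^ (p-1) * f e + e ^ p * deriv f e)) :=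
          integral_add h12 hint3
      _ = (∫ v : ℝ, K v * (e ^ p * f e))
            + (∫ v : ℝ, (b1 * (p * e ^ (p-1) * f e + e ^ p * deriv f e)) * (v * K v))
            + ∫ v : ℝ, K v * ((e + b1*v) ^ p * f (e + b1*v) - e ^ p * f e
              - (b1*v) * (p * e ^ (p-1) * f e + e ^ p * deriv f e)) := by
          rw [integral_add hint1 hvK]
  have hz1 : (∫ v : ℝ, K v * (e ^ p * f e)) = 0 := by
    rw [integral_mul_const, hKzero, zero_mul]
  have hz2 : (∫ v : ℝ, (b1 * (p * e ^ (p-1) * f e + e ^ p * deriv f e)) * (v * K v)) = 0 := by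
    rw [integral_const_mul, hKvzero, mul_zero]
  -- bounding the remainder integral
  have hpoint : ∀ v : ℝ, |K v| * |(e + b1*v) ^ p * f (e + b1*v) - e ^ p * f e
      - (b1*v) * (p * e ^ (p-1) * f e + e ^ p * deriv f e)|
      ≤ |K v| * (M * b1^2 * v^2) := by
    intro v
    apply mul_le_mul_of_nonneg_left _ (abs_nonneg _)
    calc |(e + b1*v) ^ p * f (e + b1*v) - e ^ p * f e
          - (b1*v) * (p * e ^ (p-1) * f e + e ^ p * deriv f e)|
        ≤ M * (b1*v)^2 := htaylor p hp e (b1*v)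
      _ = M * b1^2 * v^2 := by ring
  have hdom : Integrable (fun v : ℝ => |K v| * (M * b1^2 * v^2)) := by
    apply Continuous.integrable_of_hasCompactSupport
    · exact hKc.abs.mul (continuous_const.mul (continuous_pow 2))
    · exact hKs.abs.mul_right
  have hCbound : |∫ v : ℝ, K v * ((e + b1*v) ^ p * f (e + b1*v) - e ^ p * f e
      - (b1*v) * (p * e ^ (p-1) * f e + e ^ p * deriv f e))|
      ≤ M * b1^2 * ∫ v : ℝ, v^2 * |K v| := by
    calc |∫ v : ℝ, K v * ((e + b1*v) ^ p * f (e + b1*v) - e ^ p * f e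
          - (b1*v) * (p * e ^ (p-1) * f e + e ^ p * deriv f e))|
        ≤ ∫ v : ℝ, |K v| * |(e + b1*v) ^ p * f (e + b1*v) - e ^ p * f e
          - (b1*v) * (p * e ^ (p-1) * f e + e ^ p * deriv f e)| := by
          simpa [Real.norm_eq_abs] using
            norm_integral_le_integral_norm (μ := volume)
              (fun v : ℝ => K v * ((e + b1*v) ^ p * f (e + b1*v) - e ^ p * f e
                - (b1*v) * (p * e ^ (p-1) * f e + e ^ p * deriv f e)))
      _ ≤ ∫ v : ℝ, |K v| * (M * b1^2 * v^2) := by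
          have hint3' : Integrable (fun v : ℝ => |K v| * |(e + b1*v) ^ p * f (e + b1*v)
              - e ^ p * f e - (b1*v) * (p * e ^ (p-1) * f e + e ^ p * deriv f e)|) := by
            simpa [abs_mul] using hint3.abs
          exact integral_mono hint3' hdom hpoint
      _ = M * b1^2 * ∫ v : ℝ, v^2 * |K v| := by
          rw [show (fun v : ℝ => |K v| * (M * b1^2 * v^2))
            = fun v : ℝ => (M * b1^2) * (v^2 * |K v|) from funext fun v => by ring]
          exact integral_const_mul (M * b1^2) (fun v : ℝ => v^2 * |K v|)
  -- conclusion
  have hb3 : (0:ℝ) < b1^3 := by positivity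
  calc |∫ u : ℝ, K ((u - e)/b1) * (u ^ p * f u)|
      = b1 * |∫ v : ℝ, K v * ((e + b1*v) ^ p * f (e + b1*v) - e ^ p * f e
          - (b1*v) * (p * e ^ (p-1) * f e + e ^ p * deriv f e))| := by
        rw [hstepA, hsplit, hz1, hz2, zero_add, zero_add, abs_mul, abs_of_pos hb1]
    _ ≤ b1 * (M * b1^2 * ∫ v : ℝ, v^2 * |K v|) :=
        mul_le_mul_of_nonneg_left hCbound hb1.le
    _ = (M * ∫ v : ℝ, v^2 * |K v|) * b1^3 := by ring
    _ ≤ (M * ((∫ v : ℝ, v^2 * |iteratedDeriv 2 K1 v|)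
        + (∫ v : ℝ, v^2 * |iteratedDeriv 3 K1 v|)) + 1) * b1^3 := by
        apply mul_le_mul_of_nonneg_right _ hb3.le
        nlinarith [mul_le_mul_of_nonneg_left hKJle hMnn]
end
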